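/- arXiv:2601.05790 — 2 statements merged into one kernel-verified Lean document; each statement's English description precedes it below -/
import Mathlib

section
/- Let Γ be an ordered abelian group and Δ ≤ Γ a convex subgroup. In any ℵ₁-saturated elementary extension (Γ*, Δ*) of the pair (Γ, Δ), the short exact sequence 0 → Δ* → Γ* → Γ*/Δ* → 0 splits; that is, Γ* is isomorphic as an ordered abelian group to the lexicographic sum (Γ*/Δ*) ⊕_lex Δ*. -/
open FirstOrder

universe u v

/-- The first-order language of ordered abelian groups with an extra unary predicate
(for a distinguished convex subgroup): `0`, `-`, `+`, `<`, `P`. -/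
def oagPLang : Language where
  Functions n := match n with | 0 => Unit | 1 => Unit | 2 => Unit | _ => Empty
  Relations n := match n with | 1 => Unit | 2 => Unit | _ => Empty

/-- The `oagPLang`-structure on a linearly ordered abelian group with a distinguished
subgroup interpreting the predicate. -/
def oagPStructure (G : Type*) [AddCommGroup G] [LinearOrder G] [IsOrderedAddMonoid G] (Δ : AddSubgroup G) :
    oagPLang.Structure G where
  funMap {n} f x :=
    match n, f with
    | 0, _ => 0
    | 1, _ => -(x 0)
    | 2, _ => x 0 + x 1
    | (_+3), f => f.elim
  RelMap {n} r x :=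
    match n, r with
    | 1, _ => x 0 ∈ Δ
    | 2, _ => x 0 < x 1
    | 0, r => r.elim
    | (_+3), r => r.elim

/-- `ℵ₁`-saturation of an `L`-structure `M`: every countably-parametrized, finitely
realizable set of formulas in one free variable is realized in `M`. -/
def AlephOneSaturated (L : Language) (M : Type*) [L.Structure M] : Prop :=
  ∀ (params : ℕ → M) (S : Set (L.Formula (ℕ ⊕ Unit))),
    (∀ s : Finset (L.Formula (ℕ ⊕ Unit)), ↑s ⊆ S →
      ∃ x : M, ∀ φ ∈ s, φ.Realize (Sum.elim params fun _ => x)) →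
    ∃ x : M, ∀ φ ∈ S, φ.Realize (Sum.elim params fun _ => x)

namespace OagAux

/-- iterated lcm sequence -/
def dseq (f : ℕ → ℕ) : ℕ → ℕ
  | 0 => 1
  | k+1 => Nat.lcm (dseq f k) (f (k+1))

theorem pureZ {Γs : Type*} [AddCommGroup Γs] [LinearOrder Γs] [IsOrderedAddMonoid Γs] (W : AddSubgroup Γs)
    (h : ∀ (z : Γs) (n : ℕ), 0 < n → n • z ∈ W → z ∈ W) :
    ∀ (z : Γs) (N : ℤ), N ≠ 0 → N • z ∈ W → z ∈ W := by
  intro z N hN hmem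
  rcases lt_trichotomy N 0 with hlt | heq | hgt
  · apply h z (-N).toNat (by omega)
    have : ((-N).toNat : ℤ) • z = -(N • z) := by
      rw [Int.toNat_of_nonneg (by omega)]; module
    rw [← natCast_zsmul, this]
    exact W.neg_mem hmem
  · exact absurd heq hN
  · apply h z N.toNat (by omega)
    rw [← natCast_zsmul, Int.toNat_of_nonneg (by omega)]
    exact hmem

theorem hcancel {Γs : Type*} [AddCommGroup Γs] [LinearOrder Γs] [IsOrderedAddMonoid Γs] (a b : Γs) (n : ℕ) (hn : 0 < n)
    (h : n • a = n • b) : a = b := by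
  have h2 : (n : ℤ) • a = (n : ℤ) • b := by rw [natCast_zsmul, natCast_zsmul]; exact h
  exact zsmul_right_injective (by exact_mod_cast hn.ne') h2

theorem lcm_denom {Γs : Type*} [AddCommGroup Γs] [LinearOrder Γs] [IsOrderedAddMonoid Γs] (W : AddSubgroup Γs)
    (γ x x' : Γs) {n k : ℕ} (hn : 0 < n) (hk : 0 < k)
    (hx : n • x - γ ∈ W) (hx' : k • x' - γ ∈ W) :
    ∃ z, (Nat.lcm n k) • z - γ ∈ W := by
  obtain ⟨n', hn'⟩ := Nat.dvd_lcm_left n k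
  obtain ⟨k', hk'⟩ := Nat.dvd_lcm_right n k
  set g : ℕ := Nat.gcd n k with hg
  have hgpos : 0 < g := Nat.gcd_pos_of_pos_left _ hn
  have hbez : (g : ℤ) = n * Nat.gcdA n k + k * Nat.gcdB n k := Nat.gcd_eq_gcd_ab n k
  set a : ℤ := Nat.gcdA n k
  set b : ℤ := Nat.gcdB n k
  have hlg : Nat.lcm n k * g = n * k := by
    rw [mul_comm]; exact Nat.gcd_mul_lcm n k
  have h2 : n' * g = k :=
    Nat.eq_of_mul_eq_mul_left hn (by rw [show n * (n' * g) = n * n' * g by ring, ← hn', hlg])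
  have h4 : k' * g = n :=
    Nat.eq_of_mul_eq_mul_left hk (by rw [show k * (k' * g) = k * k' * g by ring, ← hk', hlg]; ring)
  have h5 : (g : ℤ) * ((n' : ℤ) * b + (k' : ℤ) * a) = (g : ℤ) * 1 := by
    have e2 : (n' : ℤ) * g = k := by exact_mod_cast congrArg (Nat.cast : ℕ → ℤ) h2
    have e4 : (k' : ℤ) * g = n := by exact_mod_cast congrArg (Nat.cast : ℕ → ℤ) h4
    calc (g : ℤ) * ((n' : ℤ) * b + (k' : ℤ) * a)
        = ((n' : ℤ) * g) * b + ((k' : ℤ) * g) * a := by ring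
      _ = (k : ℤ) * b + (n : ℤ) * a := by rw [e2, e4]
      _ = (g : ℤ) * 1 := by rw [mul_one, hbez]; ring
  have hcoef : (n' : ℤ) * b + (k' : ℤ) * a = 1 := by
    have hgz : (g : ℤ) ≠ 0 := by exact_mod_cast hgpos.ne'
    exact mul_left_cancel₀ hgz h5
  refine ⟨b • x + a • x', ?_⟩
  have hl1 : ((Nat.lcm n k : ℕ) : ℤ) = (n : ℤ) * n' := by exact_mod_cast hn'
  have hl2 : ((Nat.lcm n k : ℕ) : ℤ) = (k : ℤ) * k' := by exact_mod_cast hk'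
  have hsplit : ((Nat.lcm n k : ℕ) : ℤ) • (b • x + a • x')
      = ((n:ℤ)*n') • (b • x) + ((k:ℤ)*k') • (a • x') := by
    rw [smul_add, ← hl1, ← hl2]
  have key : ((Nat.lcm n k : ℕ) : ℤ) • (b • x + a • x') - γ
      = ((n' : ℤ) * b) • ((n : ℤ) • x - γ) + ((k' : ℤ) * a) • ((k : ℤ) • x' - γ)
        + ((n' : ℤ) * b + (k' : ℤ) * a - 1) • γ := by
    rw [hsplit]; module
  rw [hcoef, sub_self, zero_smul, add_zero] at key
  have hc1 : (n : ℤ) • x - γ ∈ W := by rw [natCast_zsmul]; exact hx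
  have hc2 : (k : ℤ) • x' - γ ∈ W := by rw [natCast_zsmul]; exact hx'
  have : ((Nat.lcm n k : ℕ) : ℤ) • (b • x + a • x') - γ ∈ W := by
    rw [key]; exact W.add_mem (W.zsmul_mem hc1 _) (W.zsmul_mem hc2 _)
  rwa [natCast_zsmul] at this

variable {α : Type*}
def tAdd (t u : oagPLang.Term α) : oagPLang.Term α := Language.Term.func (l := 2) () ![t, u]
def tNeg (t : oagPLang.Term α) : oagPLang.Term α := Language.Term.func (l := 1) () ![t]
def tSmul : ℕ → oagPLang.Term α → oagPLang.Term α
  | 0, _ => Language.Term.func (l := 0) () ![]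
  | n+1, t => tAdd (tSmul n t) t

/-- `∃ y, x = d • y - E_i ∧ P (y - γ_j)`. -/
def φ (d i j : ℕ) : oagPLang.Formula (ℕ ⊕ Unit) :=
  Language.BoundedFormula.ex
    ((Language.Term.bdEqual
        (Language.Term.var (Sum.inl (Sum.inr ())))
        (tAdd (tSmul d (Language.Term.var (Sum.inr 0)))
          (tNeg (Language.Term.var (Sum.inl (Sum.inl i)))))) ⊓
      (Language.Relations.boundedFormula₁ ()
        (tAdd (Language.Term.var (Sum.inr 0)) (tNeg (Language.Term.var (Sum.inl (Sum.inl j)))))))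

section
variable {G : Type*} [AddCommGroup G] [LinearOrder G] [IsOrderedAddMonoid G] (Δ : AddSubgroup G)

theorem realize_tAdd (v : α → G) (t u : oagPLang.Term α) :
    @Language.Term.realize oagPLang G (oagPStructure G Δ) α v (tAdd t u)
      = @Language.Term.realize oagPLang G (oagPStructure G Δ) α v t
        + @Language.Term.realize oagPLang G (oagPStructure G Δ) α v u := rfl

theorem realize_tNeg (v : α → G) (t : oagPLang.Term α) :
    @Language.Term.realize oagPLang G (oagPStructure G Δ) α v (tNeg t)
      = -(@Language.Term.realize oagPLang G (oagPStructure G Δ) α v t) := rfl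

theorem realize_tSmul (v : α → G) (n : ℕ) (t : oagPLang.Term α) :
    @Language.Term.realize oagPLang G (oagPStructure G Δ) α v (tSmul n t)
      = n • (@Language.Term.realize oagPLang G (oagPStructure G Δ) α v t) := by
  induction n with
  | zero => rw [zero_nsmul]; rfl
  | succ n ih => rw [tSmul, realize_tAdd, ih, succ_nsmul]

theorem realize_φ (d i j : ℕ) (v : ℕ ⊕ Unit → G) :
    @Language.Formula.Realize oagPLang G (oagPStructure G Δ) _ (φ d i j) v ↔
      ∃ y : G, v (Sum.inr ()) = d • y - v (Sum.inl i) ∧ y - v (Sum.inl j) ∈ Δ := by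
  letI : oagPLang.Structure G := oagPStructure G Δ
  rw [φ, Language.Formula.Realize, Language.BoundedFormula.realize_ex]
  refine exists_congr fun y => ?_
  rw [Language.BoundedFormula.realize_inf, Language.BoundedFormula.realize_bdEqual]
  erw [Language.BoundedFormula.realize_rel₁]
  set w : (ℕ ⊕ Unit) ⊕ Fin 1 → G := Sum.elim v (Fin.snoc (default : Fin 0 → G) y) with hw
  have hwy : w (Sum.inr 0) = y := by simp [hw, Fin.snoc]
  have h1 : Language.Term.realize w
      (tAdd (tSmul d (Language.Term.var (Sum.inr 0)))
        (tNeg (Language.Term.var (Sum.inl (Sum.inl i))))) = d • y - v (Sum.inl i) := by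
    rw [realize_tAdd, realize_tNeg, realize_tSmul,
      Language.Term.realize_var, Language.Term.realize_var, hwy, sub_eq_add_neg]
    rfl
  have h2 : Language.Term.realize w
      (tAdd (Language.Term.var (Sum.inr 0)) (tNeg (Language.Term.var (Sum.inl (Sum.inl j)))))
      = y - v (Sum.inl j) := by
    rw [realize_tAdd, realize_tNeg,
      Language.Term.realize_var, Language.Term.realize_var, hwy, sub_eq_add_neg]
    rfl
  have h3 : Language.Term.realize w
      (Language.Term.var (Sum.inl (Sum.inr ())) : oagPLang.Term _) = v (Sum.inr ()) := rfl
  rw [h1, h2, h3]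
  have h4 : Language.Structure.RelMap (L := oagPLang) (M := G) (n := 1) ()
      ![y - v (Sum.inl j)] ↔ y - v (Sum.inl j) ∈ Δ := Iff.rfl
  rw [h4]
end

end OagAux
namespace OagAux

theorem complement_exists {Γs : Type*} [AddCommGroup Γs] [LinearOrder Γs] [IsOrderedAddMonoid Γs] (Δs : AddSubgroup Γs)
    (hconvs : ∀ γ δ : Γs, 0 ≤ γ → γ ≤ δ → δ ∈ Δs → γ ∈ Δs)
    (hsat : @AlephOneSaturated oagPLang Γs (oagPStructure Γs Δs)) :
    ∃ C : AddSubgroup Γs, C ⊓ Δs = ⊥ ∧ ∀ x : Γs, ∃ c ∈ C, x - c ∈ Δs := by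
  classical
  -- convex subgroups are pure
  have hΔpure : ∀ (z : Γs) (n : ℕ), 0 < n → n • z ∈ Δs → z ∈ Δs := by
    intro z n hn hmem
    rcases le_total 0 z with hz | hz
    · refine hconvs z (n • z) hz ?_ hmem
      obtain ⟨m, rfl⟩ : ∃ m, n = m + 1 := ⟨n - 1, by omega⟩
      calc z = 0 + z := by abel
        _ ≤ m • z + z := by
            exact add_le_add_left (nsmul_nonneg hz m) z
        _ = (m + 1) • z := (succ_nsmul z m).symm
    · have h1 : (0:Γs) ≤ -z := by simpa using hz
      have h2 : n • (-z) ∈ Δs := by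
        rw [smul_neg]; exact Δs.neg_mem hmem
      have h3 : -z ∈ Δs := by
        refine hconvs (-z) (n • (-z)) h1 ?_ h2
        obtain ⟨m, rfl⟩ : ∃ m, n = m + 1 := ⟨n - 1, by omega⟩
        calc -z = 0 + -z := by abel
          _ ≤ m • (-z) + -z := add_le_add_left (nsmul_nonneg h1 m) _
          _ = (m + 1) • (-z) := (succ_nsmul (-z) m).symm
      simpa using Δs.neg_mem h3
  set S : Set (AddSubgroup Γs) :=
    {C | C ⊓ Δs = ⊥ ∧ ∀ (z : Γs) (n : ℕ), 0 < n → n • z ∈ C ⊔ Δs → z ∈ C ⊔ Δs} with hSdef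
  have hbot : (⊥ : AddSubgroup Γs) ∈ S := by
    constructor
    · simp
    · intro z n hn hz
      rw [bot_sup_eq] at hz ⊢
      exact hΔpure z n hn hz
  have hchain : ∀ c ⊆ S, IsChain (· ≤ ·) c → ∀ y ∈ c, ∃ ub ∈ S, ∀ z ∈ c, z ≤ ub := by
    intro c hcS hch y hy
    set U : AddSubgroup Γs :=
      { carrier := ⋃ D ∈ c, (D : Set Γs)
        zero_mem' := Set.mem_biUnion hy y.zero_mem
        add_mem' := by
          intro a b ha hb
          simp only [Set.mem_iUnion, SetLike.mem_coe] at ha hb ⊢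
          obtain ⟨D1, hD1, ha⟩ := ha
          obtain ⟨D2, hD2, hb⟩ := hb
          rcases eq_or_ne D1 D2 with rfl | hne
          · exact ⟨D1, hD1, D1.add_mem ha hb⟩
          · rcases hch hD1 hD2 hne with hle | hle
            · exact ⟨D2, hD2, D2.add_mem (hle ha) hb⟩
            · exact ⟨D1, hD1, D1.add_mem ha (hle hb)⟩
        neg_mem' := by
          intro a ha
          simp only [Set.mem_iUnion, SetLike.mem_coe] at ha ⊢
          obtain ⟨D, hD, ha⟩ := ha
          exact ⟨D, hD, D.neg_mem ha⟩ } with hU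
    have hUmem : ∀ x : Γs, x ∈ U ↔ ∃ D ∈ c, x ∈ D := by
      intro x
      show x ∈ (⋃ D ∈ c, (D : Set Γs)) ↔ _
      simp
    refine ⟨U, ⟨?_, ?_⟩, ?_⟩
    · rw [eq_bot_iff]
      intro x hx
      rw [AddSubgroup.mem_inf] at hx
      obtain ⟨D, hD, hxD⟩ := (hUmem x).mp hx.1
      have : x ∈ D ⊓ Δs := ⟨hxD, hx.2⟩
      rw [(hcS hD).1] at this
      exact this
    · intro z n hn hz
      rw [AddSubgroup.mem_sup] at hz
      obtain ⟨u, hu, δ, hδ, hsum⟩ := hz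
      obtain ⟨D, hD, huD⟩ := (hUmem u).mp hu
      have hmem : n • z ∈ D ⊔ Δs := AddSubgroup.mem_sup.mpr ⟨u, huD, δ, hδ, hsum⟩
      have hz' : z ∈ D ⊔ Δs := (hcS hD).2 z n hn hmem
      have hle : D ⊔ Δs ≤ U ⊔ Δs := by
        apply sup_le_sup_right
        intro x hx
        exact (hUmem x).mpr ⟨D, hD, hx⟩
      exact hle hz'
    · intro D hD x hx
      exact (hUmem x).mpr ⟨D, hD, hx⟩
  obtain ⟨C, -, hmax⟩ := zorn_le_nonempty₀ S hchain ⊥ hbot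
  have hCS : C ∈ S := hmax.prop
  have hdisj : C ⊓ Δs = ⊥ := hCS.1
  set W : AddSubgroup Γs := C ⊔ Δs with hWdef
  have hWpure : ∀ (z : Γs) (n : ℕ), 0 < n → n • z ∈ W → z ∈ W := hCS.2
  have hWpureZ : ∀ (z : Γs) (N : ℤ), N ≠ 0 → N • z ∈ W → z ∈ W := pureZ W hWpure
  have hCW : C ≤ W := le_sup_left
  have hΔW : Δs ≤ W := le_sup_right
  refine ⟨C, hdisj, ?_⟩
  by_contra hcon
  push_neg at hcon
  obtain ⟨γ, hγ⟩ := hcon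
  have hγW : γ ∉ W := by
    intro hmem
    rw [AddSubgroup.mem_sup] at hmem
    obtain ⟨cE, hc, δ, hδ, hsum⟩ := hmem
    exact hγ cE hc (by rw [← hsum]; simpa using hδ)
  -- the set of denominators
  set T : Set ℕ := {n | 0 < n ∧ ∃ x, n • x - γ ∈ W} with hTdef
  have h1T : 1 ∈ T := ⟨Nat.one_pos, γ, by rw [one_nsmul, sub_self]; exact W.zero_mem⟩
  have hTlcm : ∀ {n k : ℕ}, n ∈ T → k ∈ T → Nat.lcm n k ∈ T := by
    rintro n k ⟨hn, x, hx⟩ ⟨hk, x', hx'⟩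
    exact ⟨Nat.lcm_pos hn hk, lcm_denom W γ x x' hn hk hx hx'⟩
  set f : ℕ → ℕ := fun n => if n ∈ T then n else 1 with hfdef
  have hfT : ∀ n, f n ∈ T := by
    intro n
    by_cases h : n ∈ T
    · simpa [hfdef, h] using h
    · simpa [hfdef, h] using h1T
  set d : ℕ → ℕ := dseq f with hddef
  have hd0 : d 0 = 1 := rfl
  have hdsucc : ∀ k, d (k+1) = Nat.lcm (d k) (f (k+1)) := fun k => rfl
  have hdT : ∀ k, d k ∈ T := by
    intro k
    induction k with
    | zero => exact h1T
    | succ k ih => rw [hdsucc]; exact hTlcm ih (hfT _)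
  have hdpos : ∀ k, 0 < d k := fun k => (hdT k).1
  have hddvd : ∀ k, d k ∣ d (k+1) := fun k => by rw [hdsucc]; exact Nat.dvd_lcm_left _ _
  have hTd : ∀ n, n ∈ T → n ∣ d n := by
    intro n hn
    rcases n with - | m
    · exact absurd hn.1 (lt_irrefl 0)
    · have hfm : f (m+1) = m+1 := if_pos hn
      have h2 : f (m+1) ∣ d (m+1) := by
        rw [hdsucc]; exact Nat.dvd_lcm_right _ _
      rwa [hfm] at h2
  -- choose approximate quotients
  have hex : ∀ k, ∃ x, d k • x - γ ∈ W := fun k => (hdT k).2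
  choose γs hγs using hex
  -- multipliers
  choose mq hmqe using fun k => hddvd k
  have hmrel : ∀ k, mq k • γs (k+1) - γs k ∈ W := by
    intro k
    apply hWpure _ (d k) (hdpos k)
    have heq : d k • (mq k • γs (k+1) - γs k)
        = (d (k+1) • γs (k+1) - γ) - (d k • γs k - γ) := by
      simp only [← natCast_zsmul]
      rw [show ((d (k+1) : ℕ) : ℤ) = (d k : ℤ) * (mq k : ℤ) from by exact_mod_cast hmqe k]
      module
    rw [heq]
    exact W.sub_mem (hγs (k+1)) (hγs k)
  have hdecomp : ∀ k, ∃ cE ∈ C, ∃ δ ∈ Δs, cE + δ = mq k • γs (k+1) - γs k :=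
    fun k => AddSubgroup.mem_sup.mp (hmrel k)
  choose cs hcs δs hδs hsum using hdecomp
  -- partial sums
  set E : ℕ → Γs := fun k => Nat.rec 0 (fun k Ek => Ek + d k • cs k) k with hEdef
  have hE0 : E 0 = 0 := rfl
  have hEsucc : ∀ k, E (k+1) = E k + d k • cs k := fun k => rfl
  -- parameters
  set params : ℕ → Γs := fun n => if n % 2 = 0 then E (n / 2) else γs (n / 2) with hparams
  have hpE : ∀ k, params (2 * k) = E k := by
    intro k
    have h1 : (2 * k) % 2 = 0 := by omega
    have h2 : (2 * k) / 2 = k := by omega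
    rw [hparams]; simp [h1, h2]
  have hpγ : ∀ k, params (2 * k + 1) = γs k := by
    intro k
    have h1 : (2 * k + 1) % 2 = 1 := by omega
    have h2 : (2 * k + 1) / 2 = k := by omega
    rw [hparams]
    simp only [h1, h2]
    norm_num
  -- the type to realize
  set Sphi : Set (oagPLang.Formula (ℕ ⊕ Unit)) :=
    Set.range (fun k => φ (d k) (2*k) (2*k+1)) with hSphi
  -- downward coherence witnesses for finite satisfiability
  have hfin : ∀ K j, j ≤ K →
      ∃ yv : Γs, d K • γs K - E K = d j • yv - E j ∧ yv - γs j ∈ Δs := by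
    intro K j hjK
    obtain ⟨t, ht⟩ : ∃ t, j + t = K := ⟨K - j, by omega⟩
    clear hjK
    induction t generalizing j with
    | zero =>
      subst ht
      simp only [Nat.add_zero]
      exact ⟨γs j, rfl, by rw [sub_self]; exact Δs.zero_mem⟩
    | succ t ih =>
      have ht' : (j+1) + t = K := by omega
      obtain ⟨y', h1, h2⟩ := ih (j+1) ht'
      refine ⟨mq j • y' - cs j, ?_, ?_⟩
      · rw [h1, hEsucc j]
        simp only [← natCast_zsmul]
        rw [show ((d (j+1) : ℕ) : ℤ) = (d j : ℤ) * (mq j : ℤ) from by exact_mod_cast hmqe j]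
        module
      · have hδval : mq j • γs (j+1) - γs j - cs j = δs j := by
          have h := hsum j
          have : δs j = (cs j + δs j) - cs j := by abel
          rw [this, h]
        have heq : (mq j • y' - cs j) - γs j
            = mq j • (y' - γs (j+1)) + (mq j • γs (j+1) - γs j - cs j) := by
          simp only [← natCast_zsmul]
          module
        rw [heq, hδval]
        exact Δs.add_mem (Δs.nsmul_mem h2 _) (hδs j)
  -- finite satisfiability
  have hfs : ∀ s : Finset (oagPLang.Formula (ℕ ⊕ Unit)), ↑s ⊆ Sphi →
      ∃ x : Γs, ∀ ψ ∈ s, @Language.Formula.Realize oagPLang Γs (oagPStructure Γs Δs) _ ψ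
        (Sum.elim params fun _ => x) := by
    intro s hs
    have hidx : ∀ ψ ∈ s, ∃ k, ψ = φ (d k) (2*k) (2*k+1) := by
      intro ψ hψ
      obtain ⟨k, hk⟩ := hs hψ
      exact ⟨k, hk.symm⟩
    set idx : oagPLang.Formula (ℕ ⊕ Unit) → ℕ :=
      fun ψ => if h : ∃ k, ψ = φ (d k) (2*k) (2*k+1) then h.choose else 0 with hidxdef
    set K := s.sup idx with hK
    refine ⟨d K • γs K - E K, ?_⟩
    intro ψ hψ
    have hexk : ∃ k, ψ = φ (d k) (2*k) (2*k+1) := hidx ψ hψ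
    have hψeq : ψ = φ (d (idx ψ)) (2*(idx ψ)) (2*(idx ψ)+1) := by
      rw [hidxdef]
      simp only [dif_pos hexk]
      exact hexk.choose_spec
    have hle : idx ψ ≤ K := Finset.le_sup hψ
    rw [hψeq, realize_φ Δs]
    obtain ⟨yv, hy1, hy2⟩ := hfin K (idx ψ) hle
    refine ⟨yv, ?_, ?_⟩
    · show d K • γs K - E K = _ • yv - Sum.elim params _ (Sum.inl (2 * idx ψ))
      show d K • γs K - E K = _ • yv - params (2 * idx ψ)
      rw [hpE]
      exact hy1
    · show yv - params (2 * idx ψ + 1) ∈ Δs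
      rw [hpγ]
      exact hy2
  -- saturation
  obtain ⟨g, hg⟩ := hsat params Sphi hfs
  have hgk : ∀ k, ∃ yv, g = d k • yv - E k ∧ yv - γs k ∈ Δs := by
    intro k
    have h := hg (φ (d k) (2*k) (2*k+1)) ⟨k, rfl⟩
    rw [realize_φ Δs] at h
    obtain ⟨yv, h1, h2⟩ := h
    refine ⟨yv, ?_, ?_⟩
    · have e1 : Sum.elim params (fun _ : Unit => g) (Sum.inr ()) = g := rfl
      have e2 : Sum.elim params (fun _ : Unit => g) (Sum.inl (2*k)) = E k := hpE k
      rw [e1, e2] at h1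
      exact h1
    · have e3 : Sum.elim params (fun _ : Unit => g) (Sum.inl (2*k+1)) = γs k := hpγ k
      rw [e3] at h2
      exact h2
  choose y hy1 hy2 using hgk
  -- exact recurrence for the realized sequence
  have hyrel : ∀ k, y k = mq k • y (k+1) - cs k := by
    intro k
    apply hcancel _ _ (d k) (hdpos k)
    have h1 : d k • y k - E k = d (k+1) • y (k+1) - E (k+1) := by
      rw [← hy1 k, ← hy1 (k+1)]
    rw [hEsucc k] at h1
    have h2 : d k • y k = d (k+1) • y (k+1) - d k • cs k := by
      calc d k • y k = (d k • y k - E k) + E k := by abel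
        _ = (d (k+1) • y (k+1) - (E k + d k • cs k)) + E k := by rw [h1]
        _ = d (k+1) • y (k+1) - d k • cs k := by abel
    rw [h2]
    simp only [← natCast_zsmul]
    rw [show ((d (k+1) : ℕ) : ℤ) = (d k : ℤ) * (mq k : ℤ) from by exact_mod_cast hmqe k]
    module
  -- rewriting small indices in terms of large ones
  have hcomb : ∀ j k, j ≤ k →
      ∃ (s : ℕ) (F : Γs), F ∈ C ∧ d k = s * d j ∧ y j = s • y k - F := by
    intro j k hjk
    obtain ⟨t, ht⟩ : ∃ t, j + t = k := ⟨k - j, by omega⟩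
    clear hjk
    subst ht
    induction t with
    | zero => exact ⟨1, 0, C.zero_mem, by simp, by simp⟩
    | succ t ih =>
      obtain ⟨s, F, hF, hds, hys⟩ := ih
      refine ⟨s * mq (j+t), s • cs (j+t) + F,
        C.add_mem (C.nsmul_mem (hcs _) s) hF, ?_, ?_⟩
      · have : j + (t+1) = (j+t) + 1 := by omega
        rw [this, hmqe (j+t), hds]
        ring
      · have hidx : j + (t+1) = (j+t) + 1 := by omega
        rw [hys, hyrel (j+t), hidx]
        simp only [← natCast_zsmul]
        push_cast
        module
  -- key membership
  have hkey : ∀ k, d k • y k - γ ∈ W := by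
    intro k
    have h1 : d k • y k - d k • γs k ∈ Δs := by
      rw [← smul_sub]; exact Δs.nsmul_mem (hy2 k) _
    have h2 : (d k • y k - d k • γs k) + (d k • γs k - γ) = d k • y k - γ := by abel
    rw [← h2]
    exact W.add_mem (hΔW h1) (hγs k)
  -- the enlarged subgroup
  set C' : AddSubgroup Γs :=
    { carrier := {x | ∃ (k : ℕ) (cE : Γs) (N : ℤ), cE ∈ C ∧ x = cE + N • y k}
      zero_mem' := ⟨0, 0, 0, C.zero_mem, by simp⟩
      add_mem' := by
        rintro a b ⟨k1, c1, N1, hc1, rfl⟩ ⟨k2, c2, N2, hc2, rfl⟩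
        rcases le_total k1 k2 with hle | hle
        · obtain ⟨s, F, hF, hds, hys⟩ := hcomb k1 k2 hle
          refine ⟨k2, c1 + c2 - N1 • F, N1 * s + N2,
            C.sub_mem (C.add_mem hc1 hc2) (C.zsmul_mem hF N1), ?_⟩
          · rw [hys]
            simp only [← natCast_zsmul]
            module
        · obtain ⟨s, F, hF, hds, hys⟩ := hcomb k2 k1 hle
          refine ⟨k1, c1 + c2 - N2 • F, N1 + N2 * s,
            C.sub_mem (C.add_mem hc1 hc2) (C.zsmul_mem hF N2), ?_⟩
          · rw [hys]
            simp only [← natCast_zsmul]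
            module
      neg_mem' := by
        rintro a ⟨k, cE, N, hc, rfl⟩
        exact ⟨k, -cE, -N, C.neg_mem hc, by simp only [neg_add, ← neg_smul]⟩ } with hC'
  have hmemC' : ∀ x : Γs, x ∈ C' ↔ ∃ (k : ℕ) (cE : Γs) (N : ℤ), cE ∈ C ∧ x = cE + N • y k := by
    intro x; exact Iff.rfl
  have hCsub : C ≤ C' := fun x hx => ⟨0, x, 0, hx, by simp⟩
  have hWle : W ≤ C' ⊔ Δs := sup_le_sup_right hCsub _
  -- C' is disjoint from Δs
  have hdisj' : C' ⊓ Δs = ⊥ := by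
    rw [eq_bot_iff]
    rintro x hx
    rw [AddSubgroup.mem_inf] at hx
    obtain ⟨⟨k, cE, N, hc, rfl⟩, hxΔ⟩ := hx
    rcases eq_or_ne N 0 with rfl | hN
    · rw [zero_smul, add_zero] at hxΔ ⊢
      have : cE ∈ C ⊓ Δs := ⟨hc, hxΔ⟩
      rw [hdisj] at this
      exact this
    · exfalso
      have h1 : N • y k ∈ W := by
        have heq : N • y k = (cE + N • y k) - cE := by abel
        rw [heq]
        exact W.sub_mem (hΔW hxΔ) (hCW hc)
      have h2 : N • γ ∈ W := by
        have heq : N • γ = d k • (N • y k) - N • (d k • y k - γ) := by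
          simp only [← natCast_zsmul]
          module
        rw [heq]
        exact W.sub_mem (W.nsmul_mem h1 _) (W.zsmul_mem (hkey k) N)
      exact hγW (hWpureZ γ N hN h2)
  -- C' ⊔ Δs is pure
  have hpure' : ∀ (z : Γs) (n : ℕ), 0 < n → n • z ∈ C' ⊔ Δs → z ∈ C' ⊔ Δs := by
    intro z n hn hz
    rw [AddSubgroup.mem_sup] at hz
    obtain ⟨x, hxC', δ, hδ, hsum2⟩ := hz
    obtain ⟨k, cE, N, hc, rfl⟩ := hxC'
    have hsum3 : (n : ℤ) • z = cE + N • y k + δ := by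
      rw [natCast_zsmul, ← hsum2]
    have hnd : (0:ℤ) < (n : ℤ) * d k := by
      have h1 : (0:ℤ) < (n:ℤ) := by exact_mod_cast hn
      have h2 : (0:ℤ) < (d k : ℤ) := by exact_mod_cast hdpos k
      exact mul_pos h1 h2
    have h5 : ((n : ℤ) * d k) • z - N • γ ∈ W := by
      have e0 : ((n:ℤ) * d k) • z = (d k : ℤ) • ((n:ℤ) • z) := by
        rw [smul_smul, mul_comm]
      have e1 : ((n:ℤ) * d k) • z - N • γ
          = (d k : ℤ) • cE + (d k : ℤ) • δ + N • ((d k : ℤ) • y k - γ) := by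
        rw [e0, hsum3]
        module
      rw [e1]
      refine W.add_mem (W.add_mem ?_ ?_) ?_
      · exact hCW (C.zsmul_mem hc _)
      · exact hΔW (Δs.zsmul_mem hδ _)
      · refine W.zsmul_mem ?_ N
        rw [natCast_zsmul]
        exact hkey k
    rcases eq_or_ne N 0 with rfl | hN
    · have h6 : ((n : ℤ) * d k) • z ∈ W := by
        have : ((n : ℤ) * d k) • z - (0:ℤ) • γ = ((n : ℤ) * d k) • z := by
          rw [zero_smul, sub_zero]
        rwa [this] at h5
      exact hWle (hWpureZ z _ hnd.ne' h6)
    · set e : ℕ := Int.gcd N ((n:ℤ) * d k) with he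
      have hepos : 0 < e := Int.gcd_pos_iff.mpr (Or.inl hN)
      set N' : ℤ := N / (e:ℤ) with hN'
      set M : ℤ := ((n:ℤ) * d k) / (e:ℤ) with hM
      have hNe : (e:ℤ) * N' = N := Int.mul_ediv_cancel' (Int.gcd_dvd_left _ _)
      have hMe : (e:ℤ) * M = (n:ℤ) * d k := Int.mul_ediv_cancel' (Int.gcd_dvd_right _ _)
      have hMpos : 0 < M := by
        nlinarith [hMe, hnd, (by exact_mod_cast hepos : (0:ℤ) < (e:ℤ))]
      have hcop : IsCoprime N' M := by
        rw [Int.isCoprime_iff_gcd_eq_one]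
        exact Int.gcd_div_gcd_div_gcd (by exact_mod_cast hepos)
      obtain ⟨a, b, hab⟩ := hcop
      have h6 : M • z - N' • γ ∈ W := by
        apply hWpureZ _ (e : ℤ) (by exact_mod_cast hepos.ne')
        have heq : (e:ℤ) • (M • z - N' • γ) = ((e:ℤ) * M) • z - ((e:ℤ) * N') • γ := by
          module
        rw [heq, hMe, hNe]
        exact h5
      set M' : ℕ := M.toNat with hM'def
      have hMM' : (M' : ℤ) = M := Int.toNat_of_nonneg hMpos.le
      have hM'pos : 0 < M' := by omega
      have hM'T : M' ∈ T := by
        refine ⟨hM'pos, a • z + b • γ, ?_⟩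
        have heq : M' • (a • z + b • γ) - γ
            = a • (M • z - N' • γ) + (a * N' + b * M - 1) • γ := by
          simp only [← natCast_zsmul, hMM']
          module
        rw [heq, hab, sub_self, zero_smul, add_zero]
        exact W.zsmul_mem h6 a
      obtain ⟨s, hds⟩ : M' ∣ d M' := hTd M' hM'T
      have h7 : z - (N' * (s:ℤ)) • y M' ∈ W := by
        apply hWpureZ _ M (by exact_mod_cast hMpos.ne')
        have heq : M • (z - (N' * (s:ℤ)) • y M')
            = (M • z - N' • γ) - N' • ((d M' : ℤ) • y M' - γ) := by
          rw [← hMM']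
          rw [show ((d M' : ℕ) : ℤ) = (M' : ℤ) * (s:ℤ) from by exact_mod_cast hds]
          module
        rw [heq]
        refine W.sub_mem h6 (W.zsmul_mem ?_ N')
        rw [natCast_zsmul]
        exact hkey M'
      obtain ⟨cW, hcW, δW, hδW, hsplit⟩ := AddSubgroup.mem_sup.mp h7
      refine AddSubgroup.mem_sup.mpr
        ⟨cW + (N' * (s:ℤ)) • y M', ⟨M', cW, N' * (s:ℤ), hcW, rfl⟩, δW, hδW, ?_⟩
      calc (cW + (N' * (s:ℤ)) • y M') + δW
          = (cW + δW) + (N' * (s:ℤ)) • y M' := by abel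
        _ = (z - (N' * (s:ℤ)) • y M') + (N' * (s:ℤ)) • y M' := by rw [hsplit]
        _ = z := by abel
  -- maximality contradiction
  have hC'S : C' ∈ S := ⟨hdisj', hpure'⟩
  have hle' : C' ≤ C := hmax.2 hC'S hCsub
  have hy0C : y 0 ∈ C := hle' ⟨0, 0, 1, C.zero_mem, by simp⟩
  have hγsW : γs 0 ∈ W := by
    have h1 : y 0 - γs 0 ∈ Δs := hy2 0
    have heq : γs 0 = y 0 - (y 0 - γs 0) := by abel
    rw [heq]
    exact W.sub_mem (hCW hy0C) (hΔW h1)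
  have hγinW : γ ∈ W := by
    have h1 := hγs 0
    rw [hd0, one_nsmul] at h1
    have heq : γ = γs 0 - (γs 0 - γ) := by abel
    rw [heq]
    exact W.sub_mem hγsW h1
  exact hγW hγinW

end OagAux


theorem complement_to_iso {Γs : Type*} [AddCommGroup Γs] [LinearOrder Γs] [IsOrderedAddMonoid Γs] (Δs : AddSubgroup Γs)
    (hconvs : ∀ γ δ : Γs, 0 ≤ γ → γ ≤ δ → δ ∈ Δs → γ ∈ Δs)
    (C : AddSubgroup Γs) (hdisj : C ⊓ Δs = ⊥) (hsup : ∀ x : Γs, ∃ c ∈ C, x - c ∈ Δs) :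
    ∃ (e : Γs ≃+ Lex (↥C × ↥Δs)), StrictMono e ∧ ∀ d : ↥Δs, e (d : Γs) = toLex (0, d) := by
  have huniq : ∀ (x c c' : Γs), c ∈ C → c' ∈ C → x - c ∈ Δs → x - c' ∈ Δs → c = c' := by
    intro x c c' hc hc' h h'
    have h2 : c' - c ∈ Δs := by
      have := Δs.sub_mem h h'
      simpa using this
    have h3 : c' - c ∈ C ⊓ Δs := ⟨C.sub_mem hc' hc, h2⟩
    rw [hdisj] at h3
    exact (sub_eq_zero.mp (h3 : c' - c = 0)).symm
  choose cc hcc hdd using hsup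
  set f : Γs → Lex (↥C × ↥Δs) := fun x => toLex (⟨cc x, hcc x⟩, ⟨x - cc x, hdd x⟩) with hf
  have hcc_add : ∀ x y : Γs, cc (x + y) = cc x + cc y := by
    intro x y
    refine huniq (x+y) _ _ (hcc _) (C.add_mem (hcc x) (hcc y)) (hdd _) ?_
    have : (x + y) - (cc x + cc y) = (x - cc x) + (y - cc y) := by abel
    rw [this]; exact Δs.add_mem (hdd x) (hdd y)
  have hcc_of : ∀ (c d : Γs), c ∈ C → d ∈ Δs → cc (c + d) = c := by
    intro c d hc hd
    refine huniq (c+d) _ _ (hcc _) hc (hdd _) (by simpa using hd)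
  have hfval : ∀ (c d : Γs) (hc : c ∈ C) (hd : d ∈ Δs),
      f (c + d) = toLex (⟨c, hc⟩, ⟨d, hd⟩) := by
    intro c d hc hd
    simp only [hf]
    apply congrArg toLex
    have h1 := hcc_of c d hc hd
    refine Prod.ext (Subtype.ext h1) (Subtype.ext ?_)
    show (c + d) - cc (c + d) = d
    rw [h1]; abel
  set g : Lex (↥C × ↥Δs) → Γs := fun p => ((ofLex p).1 : Γs) + ((ofLex p).2 : Γs) with hg
  have hleft : Function.LeftInverse g f := by
    intro x; simp [hf, hg]
  have hright : Function.RightInverse g f := by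
    intro p
    have := hfval ((ofLex p).1 : Γs) ((ofLex p).2 : Γs) (ofLex p).1.2 (ofLex p).2.2
    simp only [hg]
    rw [this]
    rfl
  have hmapadd : ∀ x y : Γs, f (x + y) = f x + f y := by
    intro x y
    have hadd : ∀ p q : ↥C × ↥Δs, toLex p + toLex q = toLex (p + q) := fun p q => rfl
    simp only [hf, hadd]
    apply congrArg toLex
    refine Prod.ext (Subtype.ext ?_) (Subtype.ext ?_)
    · exact hcc_add x y
    · show (x + y) - cc (x + y) = (x - cc x) + (y - cc y)
      rw [hcc_add]; abel
  set e : Γs ≃+ Lex (↥C × ↥Δs) := AddEquiv.mk' (Equiv.mk f g hleft hright) hmapadd with he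
  refine ⟨e, ?_, ?_⟩
  · intro x y hxy
    show f x < f y
    rcases eq_or_ne (cc x) (cc y) with hcase | hcase
    · apply Prod.Lex.lt_iff.mpr
      right
      refine ⟨Subtype.ext hcase, ?_⟩
      show x - cc x < y - cc y
      rw [hcase]; exact sub_lt_sub_right hxy _
    · apply Prod.Lex.lt_iff.mpr
      left
      show (cc x : Γs) < cc y
      rcases lt_trichotomy (cc x) (cc y) with h | h | h
      · exact h
      · exact absurd h hcase
      · exfalso
        have h1 : (0:Γs) ≤ cc x - cc y := sub_nonneg.mpr h.le
        have h2 : cc x - cc y ≤ (y - cc y) - (x - cc x) := by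
          have heq : (y - cc y) - (x - cc x) = (cc x - cc y) + (y - x) := by abel
          rw [heq]
          exact le_add_of_nonneg_right (sub_nonneg.mpr hxy.le)
        have h3 : (y - cc y) - (x - cc x) ∈ Δs := Δs.sub_mem (hdd y) (hdd x)
        have h4 : cc x - cc y ∈ Δs := hconvs _ _ h1 h2 h3
        have h5 : cc x - cc y ∈ C ⊓ Δs := ⟨C.sub_mem (hcc x) (hcc y), h4⟩
        rw [hdisj] at h5
        exact hcase (sub_eq_zero.mp (h5 : cc x - cc y = 0))
  · intro d
    show f (d : Γs) = toLex (0, d)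
    have := hfval 0 d C.zero_mem d.2
    rw [zero_add] at this
    exact this

/-- Let `Γ` be an ordered abelian group with a convex subgroup `Δ`, and
let `(Γ*, Δ*)` be an `ℵ₁`-saturated elementary extension of the pair `(Γ, Δ)` (in the
language of ordered abelian groups with a predicate for the subgroup). Then the short
exact sequence `0 → Δ* → Γ* → Γ*/Δ* → 0` splits: `Γ*` is isomorphic, as an ordered
abelian group, to the lexicographic sum `(Γ*/Δ*) ⊕_lex Δ*` (via an isomorphism that is
the identity on `Δ*`, so that the first factor is identified with the quotient
`Γ*/Δ*`). -/
theorem saturated_pair_splits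
    {Γ : Type u} {Γs : Type v}
    [AddCommGroup Γ] [LinearOrder Γ] [IsOrderedAddMonoid Γ]
    [AddCommGroup Γs] [LinearOrder Γs] [IsOrderedAddMonoid Γs]
    (Δ : AddSubgroup Γ) (hconv : ∀ γ δ : Γ, 0 ≤ γ → γ ≤ δ → δ ∈ Δ → γ ∈ Δ)
    (Δs : AddSubgroup Γs) (hconvs : ∀ γ δ : Γs, 0 ≤ γ → γ ≤ δ → δ ∈ Δs → γ ∈ Δs)
    (hext : Nonempty
      (@Language.ElementaryEmbedding oagPLang Γ Γs (oagPStructure Γ Δ) (oagPStructure Γs Δs)))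
    (hsat : @AlephOneSaturated oagPLang Γs (oagPStructure Γs Δs)) :
    ∃ (Q : Type v) (_ : AddCommGroup Q) (_ : LinearOrder Q) (_ : IsOrderedAddMonoid Q) (e : Γs ≃+ Lex (Q × ↥Δs)),
      StrictMono e ∧ ∀ d : ↥Δs, e (d : Γs) = toLex (0, d) := by
  obtain ⟨C, hdisj, hsup⟩ := OagAux.complement_exists Δs hconvs hsat
  obtain ⟨e, he1, he2⟩ := complement_to_iso Δs hconvs C hdisj hsup
  exact ⟨↥C, inferInstance, inferInstance, inferInstance, e, he1, he2⟩
end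

section
/- Let F = 𝔽_p(t)^perf be the perfect closure of the rational function field over a prime field 𝔽_p with p > 3. Then every solution (x,y) ∈ F² of the equation y² = x³ + 1 has x, y ∈ 𝔽_p (i.e. both coordinates lie in the algebraic closure of the prime field inside F, which is 𝔽_p). -/
open Polynomial UniqueFactorizationMonoid UniqueFactorizationDomain

variable {p : ℕ} [Fact p.Prime]

private lemma isCoprime_of_isUnit_left {R : Type*} [CommSemiring R] {a b : R}
    (h : IsUnit a) : IsCoprime a b := by
  obtain ⟨u, rfl⟩ := h
  exact ⟨(u⁻¹ : Rˣ), 0, by simp⟩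

/-- p-th root of a polynomial over `ZMod p` with zero derivative. -/
private lemma exists_pth_root (hp3 : 3 < p) {f : (ZMod p)[X]}
    (hf : derivative f = 0) : ∃ g : (ZMod p)[X], g ^ p = f := by
  have hp0 : p ≠ 0 := (Fact.out : p.Prime).ne_zero
  refine ⟨Polynomial.contract p f, ?_⟩
  have h1 := Polynomial.expand_contract p hf hp0
  have h2 := Polynomial.map_frobenius_expand (p := p) (Polynomial.contract p f)
  have h3 : Polynomial.map (frobenius (ZMod p) p)
      ((Polynomial.expand (ZMod p) p) (Polynomial.contract p f))
      = (Polynomial.expand (ZMod p) p) (Polynomial.contract p f) := by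
    have : frobenius (ZMod p) p = RingHom.id (ZMod p) := by
      ext a; simp [frobenius_def, ZMod.pow_card]
    rw [this, Polynomial.map_id]
  rw [h3, h1] at h2
  exact h2.symm

/-- Core lemma: solutions of `B² = A³ + G⁶` with coprimality are constant. -/
private lemma core (hp3 : 3 < p) : ∀ n : ℕ, ∀ A B G : (ZMod p)[X],
    A.natDegree + B.natDegree + G.natDegree ≤ n → G ≠ 0 →
    IsCoprime A G → IsCoprime B G → B ^ 2 = A ^ 3 + G ^ 6 →
    A.natDegree = 0 ∧ B.natDegree = 0 ∧ G.natDegree = 0 := by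
  have hp : p.Prime := Fact.out
  intro n
  induction n using Nat.strong_induction_on with
  | _ n ih =>
  intro A B G hdeg hG hAG hBG heq
  -- degenerate cases
  by_cases hA : A = 0
  · subst hA
    rw [zero_pow (by norm_num : (3:ℕ) ≠ 0), zero_add] at heq
    have hGunit : IsUnit G := by
      refine (hBG.pow (m := 2) (n := 6)).isUnit_of_dvd' ?_ ?_
      · rw [heq]; exact dvd_pow_self G (by norm_num)
      · exact dvd_pow_self G (by norm_num)
    have hGdeg : G.natDegree = 0 := natDegree_eq_zero_of_isUnit hGunit
    have : B.natDegree * 2 = G.natDegree * 6 := by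
      have := congrArg Polynomial.natDegree heq
      simpa [Polynomial.natDegree_pow, mul_comm] using this
    exact ⟨by simp, by omega, hGdeg⟩
  by_cases hB : B = 0
  · subst hB
    rw [zero_pow (by norm_num)] at heq
    have hA3 : A ^ 3 = -(G ^ 6) := by linear_combination -heq
    have hGunit : IsUnit G := by
      refine (hAG.pow (m := 3) (n := 6)).isUnit_of_dvd' ?_ ?_
      · rw [hA3]; exact (dvd_pow_self G (by norm_num)).neg_right
      · exact dvd_pow_self G (by norm_num)
    have hGdeg : G.natDegree = 0 := natDegree_eq_zero_of_isUnit hGunit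
    have : A.natDegree * 3 = G.natDegree * 6 := by
      have := congrArg Polynomial.natDegree hA3
      simpa [Polynomial.natDegree_pow, Polynomial.natDegree_neg, mul_comm] using this
    exact ⟨by omega, by simp, hGdeg⟩
  -- main case: apply Mason–Stothers
  have hA3 : (A : (ZMod p)[X]) ^ 3 ≠ 0 := pow_ne_zero _ hA
  have hB2 : (B : (ZMod p)[X]) ^ 2 ≠ 0 := pow_ne_zero _ hB
  have hG6 : (G : (ZMod p)[X]) ^ 6 ≠ 0 := pow_ne_zero _ hG
  have hAGp : IsCoprime (A ^ 3) (G ^ 6) := hAG.pow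
  have hA3B2 : IsCoprime (A ^ 3) (B ^ 2) := by
    have h1 : IsCoprime (A ^ 3) (G ^ 6 + A ^ 3 * 1) := hAGp.add_mul_left_right 1
    have : B ^ 2 = G ^ 6 + A ^ 3 * 1 := by linear_combination heq
    rwa [← this] at h1
  have habc := Polynomial.abc (k := ZMod p) hA3 hG6 (neg_ne_zero.mpr hB2)
      hAGp
      (by linear_combination -heq)
  rcases habc with ⟨h1, h2, h3⟩ | ⟨d1, d2, d3⟩
  · exfalso
    set R := (radical (A ^ 3 * G ^ 6 * -(B ^ 2))).natDegree with hR
    have hrad : radical (A ^ 3 * G ^ 6 * -(B ^ 2)) = radical A * radical G * radical B := by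
      have e1 : A ^ 3 * G ^ 6 * -(B ^ 2) = -(A ^ 3 * G ^ 6 * B ^ 2) := by ring
      rw [e1, radical_neg,
        radical_mul (hA3B2.mul_left (hBG.symm.pow (m := 6) (n := 2))).isRelPrime,
        radical_mul hAGp.isRelPrime, radical_pow A (by norm_num), radical_pow G (by norm_num),
        radical_pow B (by norm_num)]
    have hRle : R ≤ A.natDegree + G.natDegree + B.natDegree := by
      rw [hR, hrad]
      have n1 : radical A ≠ 0 := radical_ne_zero (a := A)
      have n2 : radical G ≠ 0 := radical_ne_zero (a := G)
      have n3 : radical B ≠ 0 := radical_ne_zero (a := B)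
      rw [Polynomial.natDegree_mul (mul_ne_zero n1 n2) n3, Polynomial.natDegree_mul n1 n2]
      have d1 := Polynomial.natDegree_le_of_dvd (radical_dvd_self (a := A)) hA
      have d2 := Polynomial.natDegree_le_of_dvd (radical_dvd_self (a := G)) hG
      have d3 := Polynomial.natDegree_le_of_dvd (radical_dvd_self (a := B)) hB
      omega
    rw [Polynomial.natDegree_pow] at h1 h2
    rw [Polynomial.natDegree_neg, Polynomial.natDegree_pow] at h3
    omega
  · -- derivatives vanish: descend by p-th roots
    have c3 : (Polynomial.C ((3 : ℕ) : ZMod p)) ≠ 0 := by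
      simp only [ne_eq, Polynomial.C_eq_zero]
      rw [CharP.cast_eq_zero_iff (ZMod p) p]
      intro hdvd; have := Nat.le_of_dvd (by norm_num) hdvd; omega
    have c2 : (Polynomial.C ((2 : ℕ) : ZMod p)) ≠ 0 := by
      simp only [ne_eq, Polynomial.C_eq_zero]
      rw [CharP.cast_eq_zero_iff (ZMod p) p]
      intro hdvd; have := Nat.le_of_dvd (by norm_num) hdvd; omega
    have c6 : (Polynomial.C ((6 : ℕ) : ZMod p)) ≠ 0 := by
      simp only [ne_eq, Polynomial.C_eq_zero]
      rw [CharP.cast_eq_zero_iff (ZMod p) p]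
      intro hdvd
      have h23 : p ∣ 2 * 3 := by norm_num; exact hdvd
      rcases (Nat.Prime.dvd_mul hp).mp h23 with h | h
      · have := Nat.le_of_dvd (by norm_num) h; omega
      · have := Nat.le_of_dvd (by norm_num) h; omega
    -- extract vanishing of derivatives of A, B, G
    rw [Polynomial.derivative_pow] at d1
    rw [Polynomial.derivative_pow] at d2
    rw [derivative_neg, neg_eq_zero, Polynomial.derivative_pow] at d3
    have dA : derivative A = 0 := by
      rcases mul_eq_zero.mp d1 with h | h
      · exact absurd h (mul_ne_zero c3 (pow_ne_zero _ hA))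
      · exact h
    have dG : derivative G = 0 := by
      rcases mul_eq_zero.mp d2 with h | h
      · exact absurd h (mul_ne_zero c6 (pow_ne_zero _ hG))
      · exact h
    have dB : derivative B = 0 := by
      rcases mul_eq_zero.mp d3 with h | h
      · exact absurd h (mul_ne_zero c2 (pow_ne_zero _ hB))
      · exact h
    obtain ⟨A1, hA1⟩ := exists_pth_root hp3 dA
    obtain ⟨B1, hB1⟩ := exists_pth_root hp3 dB
    obtain ⟨G1, hG1⟩ := exists_pth_root hp3 dG
    have hppos : 0 < p := hp.pos
    have hG1ne : G1 ≠ 0 := by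
      intro h0; apply hG; rw [← hG1, h0, zero_pow hp.ne_zero]
    -- new equation
    have heq1 : B1 ^ 2 = A1 ^ 3 + G1 ^ 6 := by
      have hfro : (B1 ^ 2 - A1 ^ 3 - G1 ^ 6) ^ p = 0 := by
        have expand : (B1 ^ 2 - A1 ^ 3 - G1 ^ 6) ^ p
            = (B1 ^ p) ^ 2 - (A1 ^ p) ^ 3 - (G1 ^ p) ^ 6 := by
          have h1 := sub_pow_char (p := p) ((B1 ^ 2 - A1 ^ 3)) (G1 ^ 6)
          have h2 := sub_pow_char (p := p) (B1 ^ 2) (A1 ^ 3)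
          rw [h1, h2]; ring
        rw [expand, hA1, hB1, hG1]
        linear_combination heq
      have := pow_eq_zero_iff hp.ne_zero |>.mp hfro
      linear_combination this
    -- coprimality descends
    have hAG1 : IsCoprime A1 G1 := by
      have : IsCoprime (A1 ^ p) (G1 ^ p) := by rw [hA1, hG1]; exact hAG
      exact (this.of_isCoprime_of_dvd_left (dvd_pow_self A1 hp.ne_zero)).of_isCoprime_of_dvd_right
        (dvd_pow_self G1 hp.ne_zero)
    have hBG1 : IsCoprime B1 G1 := by
      have : IsCoprime (B1 ^ p) (G1 ^ p) := by rw [hB1, hG1]; exact hBG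
      exact (this.of_isCoprime_of_dvd_left (dvd_pow_self B1 hp.ne_zero)).of_isCoprime_of_dvd_right
        (dvd_pow_self G1 hp.ne_zero)
    -- degrees
    have degA : A.natDegree = p * A1.natDegree := by rw [← hA1, Polynomial.natDegree_pow, mul_comm]
    have degB : B.natDegree = p * B1.natDegree := by rw [← hB1, Polynomial.natDegree_pow, mul_comm]
    have degG : G.natDegree = p * G1.natDegree := by rw [← hG1, Polynomial.natDegree_pow, mul_comm]
    have hsum : A.natDegree + B.natDegree + G.natDegree
        = p * (A1.natDegree + B1.natDegree + G1.natDegree) := by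
      rw [degA, degB, degG]; ring
    by_cases hzero : A1.natDegree + B1.natDegree + G1.natDegree = 0
    · have e1 : A1.natDegree = 0 := by omega
      have e2 : B1.natDegree = 0 := by omega
      have e3 : G1.natDegree = 0 := by omega
      rw [degA, degB, degG, e1, e2, e3]
      simp
    · have hlt : A1.natDegree + B1.natDegree + G1.natDegree < n := by
        have h2 : 2 * (A1.natDegree + B1.natDegree + G1.natDegree)
            ≤ p * (A1.natDegree + B1.natDegree + G1.natDegree) :=
          Nat.mul_le_mul (by omega) (Nat.le_refl _)
        omega
      obtain ⟨e1, e2, e3⟩ := ih _ hlt A1 B1 G1 (Nat.le_refl _) hG1ne hAG1 hBG1 heq1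
      rw [degA, degB, degG, e1, e2, e3]
      simp

/-- Solutions of `y² = x³ + 1` over `𝔽_p(t)` are constant. -/
private lemma ratfunc_constant (hp3 : 3 < p) (x y : RatFunc (ZMod p))
    (h : y ^ 2 = x ^ 3 + 1) :
    ∃ a b : ZMod p, x = algebraMap (ZMod p) (RatFunc (ZMod p)) a ∧
      y = algebraMap (ZMod p) (RatFunc (ZMod p)) b := by
  have hp : p.Prime := Fact.out
  set A := x.num with hA
  set D := x.denom with hD
  set B := y.num with hB
  set E := y.denom with hE
  have hDne : D ≠ 0 := x.denom_ne_zero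
  have hEne : E ≠ 0 := y.denom_ne_zero
  set φ := algebraMap (Polynomial (ZMod p)) (RatFunc (ZMod p)) with hφ
  have hφD : φ D ≠ 0 := RatFunc.algebraMap_ne_zero hDne
  have hφE : φ E ≠ 0 := RatFunc.algebraMap_ne_zero hEne
  -- polynomial form of the equation
  have key : B ^ 2 * D ^ 3 = E ^ 2 * A ^ 3 + E ^ 2 * D ^ 3 := by
    apply RatFunc.algebraMap_injective (ZMod p)
    have hx := x.num_div_denom
    have hy := y.num_div_denom
    have h' : (φ B / φ E) ^ 2 = (φ A / φ D) ^ 3 + 1 := by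
      rw [hφ, hx, hy]; exact h
    field_simp at h'
    push_cast [map_mul, map_pow, map_add]
    linear_combination h'
  -- E² and D³ are associated
  have hcopAD : IsCoprime A D := x.isCoprime_num_denom
  have hcopBE : IsCoprime B E := y.isCoprime_num_denom
  have hE2D3 : E ^ 2 ∣ D ^ 3 := by
    have : E ^ 2 ∣ B ^ 2 * D ^ 3 := ⟨A ^ 3 + D ^ 3, by linear_combination key⟩
    exact (hcopBE.symm.pow (m := 2) (n := 2)).dvd_of_dvd_mul_left this
  have hD3E2 : D ^ 3 ∣ E ^ 2 := by
    have hdvd : D ^ 3 ∣ E ^ 2 * A ^ 3 := ⟨B ^ 2 - E ^ 2, by linear_combination -key⟩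
    exact (hcopAD.symm.pow (m := 3) (n := 3)).dvd_of_dvd_mul_right hdvd
  -- D divides E
  have hDE : D ∣ E := by
    have h3 : D ^ 3 ∣ E ^ 3 := hD3E2.trans (pow_dvd_pow E (by norm_num))
    exact (IsIntegrallyClosed.pow_dvd_pow_iff (R := Polynomial (ZMod p)) (by norm_num)).mp h3
  obtain ⟨G, hG⟩ := hDE
  have hGne : G ≠ 0 := by rintro rfl; rw [mul_zero] at hG; exact hEne hG
  -- D * C c = G ^ 2 for a nonzero constant c
  obtain ⟨u, hu⟩ := associated_of_dvd_dvd hD3E2 hE2D3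
  obtain ⟨cc, hcu, hcC⟩ := Polynomial.isUnit_iff.mp u.isUnit
  have hcne : (cc : ZMod p) ≠ 0 := by rintro rfl; simp at hcC; exact u.ne_zero hcC.symm
  have hDc : D * Polynomial.C cc = G ^ 2 := by
    have h1 : D ^ 3 * Polynomial.C cc = E ^ 2 := by rw [hcC, hu]
    rw [hG] at h1
    have h2 : D ^ 2 * (D * Polynomial.C cc) = D ^ 2 * G ^ 2 := by linear_combination h1
    exact mul_left_cancel₀ (pow_ne_zero 2 hDne) h2
  -- rewrite the equation as (C c * B)² = (C c * A)³ + G⁶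
  have hkey2 : (Polynomial.C cc * B) ^ 2 = (Polynomial.C cc * A) ^ 3 + G ^ 6 := by
    have hG2 : G ^ 2 = D * Polynomial.C cc := hDc.symm
    -- B² D = G² A³ + G² D³ (cancel D² from key, using E = D G)
    have step1 : D ^ 2 * (B ^ 2 * D) = D ^ 2 * (G ^ 2 * A ^ 3 + G ^ 2 * D ^ 3) := by
      rw [hG] at key; linear_combination key
    have step2 : B ^ 2 * D = G ^ 2 * A ^ 3 + G ^ 2 * D ^ 3 :=
      mul_left_cancel₀ (pow_ne_zero 2 hDne) step1
    -- multiply by C c³ and cancel G²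
    have step3 : G ^ 2 * ((Polynomial.C cc * B) ^ 2) = G ^ 2 * ((Polynomial.C cc * A) ^ 3 + G ^ 6) := by
      have e1 : G ^ 2 * ((Polynomial.C cc * B) ^ 2)
          = (B ^ 2 * D) * Polynomial.C cc ^ 2 * Polynomial.C cc := by
        rw [← hDc]; ring
      rw [e1, step2]
      have e2 : (G ^ 2 * A ^ 3 + G ^ 2 * D ^ 3) * Polynomial.C cc ^ 2 * Polynomial.C cc
          = G ^ 2 * (Polynomial.C cc * A) ^ 3 + G ^ 2 * (D * Polynomial.C cc) ^ 3 := by ring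
      rw [e2, hDc]
      ring
    exact mul_left_cancel₀ (pow_ne_zero 2 hGne) step3
  -- coprimality
  have hCcUnit : IsUnit (Polynomial.C cc) := Polynomial.isUnit_C.mpr (hcu)
  have hGdvdDc : G ∣ D * Polynomial.C cc := by rw [hDc]; exact dvd_pow_self G (by norm_num)
  have hAG : IsCoprime (Polynomial.C cc * A) G := by
    have h1 : IsCoprime A (D * Polynomial.C cc) :=
      hcopAD.mul_right (isCoprime_of_isUnit_left hCcUnit).symm
    exact ((isCoprime_of_isUnit_left hCcUnit).mul_left
      (h1.of_isCoprime_of_dvd_right hGdvdDc))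
  have hBG : IsCoprime (Polynomial.C cc * B) G := by
    have h1 : IsCoprime B G := hcopBE.of_isCoprime_of_dvd_right (by rw [hG]; exact dvd_mul_left G D)
    exact (isCoprime_of_isUnit_left hCcUnit).mul_left h1
  -- apply the core lemma
  obtain ⟨dA, dB, dG⟩ := core hp3
    ((Polynomial.C cc * A).natDegree + (Polynomial.C cc * B).natDegree + G.natDegree)
    (Polynomial.C cc * A) (Polynomial.C cc * B) G (Nat.le_refl _) hGne hAG hBG hkey2
  rw [Polynomial.natDegree_C_mul hcne] at dA dB
  have dD : D.natDegree = 0 := by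
    have h1 : (D * Polynomial.C cc).natDegree = 0 := by
      rw [hDc, Polynomial.natDegree_pow, dG, mul_zero]
    rwa [mul_comm, Polynomial.natDegree_C_mul hcne] at h1
  have dE : E.natDegree = 0 := by
    rw [hG, Polynomial.natDegree_mul hDne hGne, dD, dG]
  -- conclude
  have hxc : x = algebraMap (ZMod p) (RatFunc (ZMod p)) (A.coeff 0 * (D.coeff 0)⁻¹) := by
    have hAc : A = Polynomial.C (A.coeff 0) := Polynomial.eq_C_of_natDegree_eq_zero dA
    have hDcc : D = Polynomial.C (D.coeff 0) := Polynomial.eq_C_of_natDegree_eq_zero dD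
    have hD0 : D.coeff 0 ≠ 0 := by rintro h0; apply hDne; rw [hDcc, h0, map_zero]
    rw [← x.num_div_denom, ← hA, ← hD]
    rw [RatFunc.algebraMap_eq_C]
    conv_lhs => rw [hAc, hDcc]
    rw [RatFunc.algebraMap_C, RatFunc.algebraMap_C, map_mul, map_inv₀, div_eq_mul_inv]
  have hyc : y = algebraMap (ZMod p) (RatFunc (ZMod p)) (B.coeff 0 * (E.coeff 0)⁻¹) := by
    have hBc : B = Polynomial.C (B.coeff 0) := Polynomial.eq_C_of_natDegree_eq_zero dB
    have hEcc : E = Polynomial.C (E.coeff 0) := Polynomial.eq_C_of_natDegree_eq_zero dE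
    have hE0 : E.coeff 0 ≠ 0 := by rintro h0; apply hEne; rw [hEcc, h0, map_zero]
    rw [← y.num_div_denom, ← hB, ← hE]
    rw [RatFunc.algebraMap_eq_C]
    conv_lhs => rw [hBc, hEcc]
    rw [RatFunc.algebraMap_C, RatFunc.algebraMap_C, map_mul, map_inv₀, div_eq_mul_inv]
  exact ⟨_, _, hxc, hyc⟩

/-- Let `F = 𝔽_p(t)^perf` be the perfect closure of the rational
function field over `𝔽_p`, `p > 3` prime. Then every solution `(x,y) ∈ F²` of
`y² = x³ + 1` has both coordinates in (the image of) `𝔽_p`. -/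
theorem genus_one_curve_constant_points_over_perfect_closure
    (p : ℕ) [Fact p.Prime] (hp : 3 < p) [CharP (RatFunc (ZMod p)) p]
    (x y : PerfectClosure (RatFunc (ZMod p)) p)
    (h : y ^ 2 = x ^ 3 + 1) :
    ∃ a b : ZMod p,
      x = PerfectClosure.of (RatFunc (ZMod p)) p
            (algebraMap (ZMod p) (RatFunc (ZMod p)) a) ∧
      y = PerfectClosure.of (RatFunc (ZMod p)) p
            (algebraMap (ZMod p) (RatFunc (ZMod p)) b) := by
  have hprime : p.Prime := Fact.out
  -- power up x and y into the image of `of`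
  obtain ⟨n, f, hxf⟩ : ∃ n f, x ^ p ^ n = PerfectClosure.of (RatFunc (ZMod p)) p f := by
    induction x using PerfectClosure.induction_on with
    | h x =>
      obtain ⟨n, f⟩ := x
      exact ⟨n, f, by rw [← PerfectClosure.iterate_frobenius_mk (RatFunc (ZMod p)) p n f,
        iterate_frobenius]⟩
  obtain ⟨m, g, hyg⟩ : ∃ m g, y ^ p ^ m = PerfectClosure.of (RatFunc (ZMod p)) p g := by
    induction y using PerfectClosure.induction_on with
    | h y =>
      obtain ⟨m, g⟩ := y
      exact ⟨m, g, by rw [← PerfectClosure.iterate_frobenius_mk (RatFunc (ZMod p)) p m g,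
        iterate_frobenius]⟩
  have hxN : x ^ p ^ (n + m) = PerfectClosure.of (RatFunc (ZMod p)) p (f ^ p ^ m) := by
    rw [pow_add, pow_mul, hxf, map_pow]
  have hyN : y ^ p ^ (n + m) = PerfectClosure.of (RatFunc (ZMod p)) p (g ^ p ^ n) := by
    have e : y ^ p ^ (n + m) = (y ^ p ^ m) ^ p ^ n := by
      rw [← pow_mul, ← pow_add, Nat.add_comm]
    rw [e, hyg, map_pow]
  -- the powered equation
  have hofinj : Function.Injective (PerfectClosure.of (RatFunc (ZMod p)) p) :=
    (PerfectClosure.of (RatFunc (ZMod p)) p).injective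
  have heqK : (g ^ p ^ n) ^ 2 = (f ^ p ^ m) ^ 3 + 1 := by
    apply hofinj
    rw [map_pow, ← hyN, map_add, map_one, map_pow, ← hxN]
    have hh : (y ^ 2) ^ p ^ (n + m) = (x ^ 3 + 1) ^ p ^ (n + m) := by rw [h]
    rw [add_pow_char_pow, one_pow] at hh
    calc (y ^ p ^ (n + m)) ^ 2 = (y ^ 2) ^ p ^ (n + m) := by
          rw [← pow_mul, ← pow_mul, mul_comm]
      _ = (x ^ 3) ^ p ^ (n + m) + 1 := hh
      _ = (x ^ p ^ (n + m)) ^ 3 + 1 := by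
          rw [← pow_mul, ← pow_mul, mul_comm]
  -- constant solution over the rational function field
  obtain ⟨a, b, ha, hb⟩ := ratfunc_constant hp _ _ heqK
  refine ⟨a, b, ?_, ?_⟩
  · have hfix : (PerfectClosure.of (RatFunc (ZMod p)) p
        (algebraMap (ZMod p) (RatFunc (ZMod p)) a)) ^ p ^ (n + m)
        = PerfectClosure.of (RatFunc (ZMod p)) p
            (algebraMap (ZMod p) (RatFunc (ZMod p)) a) := by
      rw [← map_pow, ← map_pow, ZMod.pow_card_pow]
    have hinj : Function.Injective
        fun z : PerfectClosure (RatFunc (ZMod p)) p => z ^ p ^ (n + m) := by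
      have := (frobenius_inj (PerfectClosure (RatFunc (ZMod p)) p) p).iterate (n + m)
      intro z w hzw
      apply this
      simpa [iterate_frobenius] using hzw
    apply hinj
    simp only
    rw [hxN, hfix, ha]
  · have hfix : (PerfectClosure.of (RatFunc (ZMod p)) p
        (algebraMap (ZMod p) (RatFunc (ZMod p)) b)) ^ p ^ (n + m)
        = PerfectClosure.of (RatFunc (ZMod p)) p
            (algebraMap (ZMod p) (RatFunc (ZMod p)) b) := by
      rw [← map_pow, ← map_pow, ZMod.pow_card_pow]
    have hinj : Function.Injective
        fun z : PerfectClosure (RatFunc (ZMod p)) p => z ^ p ^ (n + m) := by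
      have := (frobenius_inj (PerfectClosure (RatFunc (ZMod p)) p) p).iterate (n + m)
      intro z w hzw
      apply this
      simpa [iterate_frobenius] using hzw
    apply hinj
    simp only
    rw [hyN, hfix, hb]
end
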